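/- arXiv:1906.10396 — 7 statements merged into one kernel-verified Lean document; each statement's English description precedes it below -/
import Mathlib

section
/- Let n and r be positive integers with r < n. Suppose Ŵ ∈ ℝ^{(r+1)×(n−r)} satisfies rank(Ŵ) ≤ 1 and, for every k = 1,…,n, the k-th antidiagonal sum vanishes: ∑_{i+j=k+1} Ŵ(i,j) = 0 (the sum ranging over valid indices 1 ≤ i ≤ r+1, 1 ≤ j ≤ n−r). Then Ŵ = 0. -/
open Polynomial

/-- A matrix of rank at most 1 over a field factors as an outer product. -/
lemma rank_le_one_factor {m k : ℕ} (W : Matrix (Fin m) (Fin k) ℝ)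
    (hrank : Matrix.rank W ≤ 1) :
    ∃ (u : Fin m → ℝ) (v : Fin k → ℝ), ∀ i j, W i j = u i * v j := by
  classical
  have h1 : Module.finrank ℝ (LinearMap.range W.mulVecLin) ≤ 1 := hrank
  obtain ⟨v₀, hv₀⟩ := finrank_le_one_iff.mp h1
  refine ⟨(v₀ : Fin m → ℝ),
    fun j => Classical.choose (hv₀ ⟨W.mulVec (Pi.single j 1), LinearMap.mem_range_self _ _⟩),
    fun i j => ?_⟩
  have hspec := Classical.choose_spec
    (hv₀ ⟨W.mulVec (Pi.single j 1), LinearMap.mem_range_self _ _⟩)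
  have h2 := congrFun (Subtype.ext_iff.mp hspec) i
  simp only [SetLike.val_smul, Pi.smul_apply, smul_eq_mul] at h2
  have h3 : (W.mulVec (Pi.single j 1)) i = W i j := by
    rw [Matrix.mulVec_single]; simp
  rw [h3] at h2
  rw [← h2]; ring

/-- if `Ŵ ∈ ℝ^{(r+1)×(n-r)}` has rank at most 1 and all of its antidiagonal sums
vanish (0-based: `∑_{i+j=k} Ŵ(i,j) = 0` for `k = 0,…,n-1`), then `Ŵ = 0`. -/
theorem stmt2 (n r : ℕ) (hn : 0 < n) (hr : 0 < r) (hrn : r < n)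
    (W : Matrix (Fin (r + 1)) (Fin (n - r)) ℝ)
    (hrank : Matrix.rank W ≤ 1)
    (hdiag : ∀ k : Fin n, ∑ i : Fin (r + 1), ∑ j : Fin (n - r),
        (if (i : ℕ) + (j : ℕ) = (k : ℕ) then W i j else 0) = 0) :
    W = 0 := by
  classical
  obtain ⟨u, v, huv⟩ := rank_le_one_factor W hrank
  set p : ℝ[X] := ∑ i : Fin (r + 1), C (u i) * X ^ (i : ℕ) with hp
  set q : ℝ[X] := ∑ j : Fin (n - r), C (v j) * X ^ (j : ℕ) with hq
  have hcoeffp : ∀ i : Fin (r + 1), p.coeff (i : ℕ) = u i := by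
    intro i
    rw [hp, Polynomial.finset_sum_coeff]
    rw [Finset.sum_eq_single i]
    · simp
    · intro b _ hb
      have : (i : ℕ) ≠ (b : ℕ) := fun h => hb (Fin.ext h.symm)
      simp [coeff_X_pow, this]
    · simp
  have hcoeffq : ∀ j : Fin (n - r), q.coeff (j : ℕ) = v j := by
    intro j
    rw [hq, Polynomial.finset_sum_coeff]
    rw [Finset.sum_eq_single j]
    · simp
    · intro b _ hb
      have : (j : ℕ) ≠ (b : ℕ) := fun h => hb (Fin.ext h.symm)
      simp [coeff_X_pow, this]
    · simp
  have hcoeffpq : ∀ k : ℕ, (p * q).coeff k =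
      ∑ i : Fin (r + 1), ∑ j : Fin (n - r),
        (if (i : ℕ) + (j : ℕ) = k then u i * v j else 0) := by
    intro k
    rw [hp, hq, Finset.sum_mul_sum]
    rw [Polynomial.finset_sum_coeff]
    refine Finset.sum_congr rfl fun i _ => ?_
    rw [Polynomial.finset_sum_coeff]
    refine Finset.sum_congr rfl fun j _ => ?_
    have : (C (u i) * X ^ (i : ℕ)) * (C (v j) * X ^ (j : ℕ))
        = C (u i * v j) * X ^ ((i : ℕ) + (j : ℕ)) := by
      rw [C_mul, pow_add]; ring
    rw [this, coeff_C_mul, coeff_X_pow]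
    by_cases h : (i : ℕ) + (j : ℕ) = k
    · simp [h]
    · have h' : k ≠ (i : ℕ) + (j : ℕ) := fun hh => h hh.symm
      simp [h, h']
  have hpq : p * q = 0 := by
    ext k
    rw [hcoeffpq k, Polynomial.coeff_zero]
    by_cases hk : k < n
    · have heq : (∑ i : Fin (r + 1), ∑ j : Fin (n - r),
          (if (i : ℕ) + (j : ℕ) = k then u i * v j else 0))
          = ∑ i : Fin (r + 1), ∑ j : Fin (n - r),
            (if (i : ℕ) + (j : ℕ) = k then W i j else 0) :=
        Finset.sum_congr rfl fun i _ => Finset.sum_congr rfl fun j _ => by rw [huv i j]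
      rw [heq]
      exact hdiag ⟨k, hk⟩
    · refine Finset.sum_eq_zero fun i _ => Finset.sum_eq_zero fun j _ => ?_
      have hi := i.isLt
      have hj := j.isLt
      have : (i : ℕ) + (j : ℕ) ≠ k := by omega
      simp [this]
  rcases mul_eq_zero.mp hpq with h | h
  · ext i j
    have : u i = 0 := by rw [← hcoeffp i, h, Polynomial.coeff_zero]
    simp [huv i j, this]
  · ext i j
    have : v j = 0 := by rw [← hcoeffq j, h, Polynomial.coeff_zero]
    simp [huv i j, this]
end

section
/- Let n, N and r be positive integers with r < n. Suppose W₁,…,W_N ∈ ℝ^{(r+1)×(n−r)} are such that the horizontally concatenated matrix W = [W₁ W₂ ⋯ W_N] ∈ ℝ^{(r+1)×N(n−r)} satisfies rank(W) ≤ 1, and for each ℓ = 1,…,N every antidiagonal sum of Wₗ vanishes, i.e., ∑_{i+j=k+1} Wₗ(i,j) = 0 for all k = 1,…,n. Then W = 0. -/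
open Polynomial in
lemma coeff_key {a b : ℕ} (u : Fin a → ℝ) (v : Fin b → ℝ) (k : ℕ) :
    ((∑ i, C (u i) * X ^ (i : ℕ)) * (∑ j, C (v j) * X ^ (j : ℕ))).coeff k
      = ∑ i : Fin a, ∑ j : Fin b, if (i : ℕ) + (j : ℕ) = k then u i * v j else 0 := by
  rw [Finset.sum_mul_sum]
  simp only [finset_sum_coeff]
  refine Finset.sum_congr rfl fun i _ => Finset.sum_congr rfl fun j _ => ?_
  rw [mul_mul_mul_comm, ← C_mul, ← pow_add, coeff_C_mul, coeff_X_pow]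
  simp [eq_comm]

open Polynomial in
lemma poly_coeff_self {a : ℕ} (u : Fin a → ℝ) (i : Fin a) :
    (∑ i, C (u i) * X ^ (i : ℕ)).coeff (i : ℕ) = u i := by
  simp only [finset_sum_coeff, coeff_C_mul, coeff_X_pow]
  rw [Finset.sum_eq_single i]
  · simp
  · intro j _ hj
    exact mul_eq_zero_of_right _ (if_neg fun h => hj (Fin.val_injective h).symm)
  · simp

open Polynomial in
lemma poly_natDegree_le {a : ℕ} (u : Fin a → ℝ) :
    (∑ i, C (u i) * X ^ (i : ℕ)).natDegree ≤ a - 1 := by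
  refine Polynomial.natDegree_sum_le_of_forall_le _ _ fun i _ => ?_
  refine (natDegree_C_mul_le _ _).trans ?_
  have := i.isLt
  simp only [natDegree_X_pow]
  omega

/-- if the horizontally concatenated matrix `W = [W₁ ⋯ W_N]`
(columns indexed by `Fin N × Fin (n-r)`) has rank at most 1 and every antidiagonal sum of each
block `Wₗ` vanishes (0-based: `∑_{i+j=k} Wₗ(i,j) = 0` for `k = 0,…,n-1`), then `W = 0`. -/
theorem stmt3 (n N r : ℕ) (hn : 0 < n) (hN : 0 < N) (hr : 0 < r) (hrn : r < n)
    (W : Fin N → Matrix (Fin (r + 1)) (Fin (n - r)) ℝ)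
    (hrank : Matrix.rank
        (Matrix.of fun (i : Fin (r + 1)) (p : Fin N × Fin (n - r)) => W p.1 i p.2) ≤ 1)
    (hdiag : ∀ ℓ : Fin N, ∀ k : Fin n, ∑ i : Fin (r + 1), ∑ j : Fin (n - r),
        (if (i : ℕ) + (j : ℕ) = (k : ℕ) then W ℓ i j else 0) = 0) :
    (Matrix.of fun (i : Fin (r + 1)) (p : Fin N × Fin (n - r)) => W p.1 i p.2) = 0 := by
  classical
  set M : Matrix (Fin (r + 1)) (Fin N × Fin (n - r)) ℝ :=
    Matrix.of fun (i : Fin (r + 1)) (p : Fin N × Fin (n - r)) => W p.1 i p.2 with hM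
  -- rank ≤ 1 : columns are multiples of a single vector
  rw [Matrix.rank_eq_finrank_span_cols] at hrank
  obtain ⟨v₀, hv₀⟩ := finrank_le_one_iff.mp hrank
  set u : Fin (r + 1) → ℝ := (v₀ : Fin (r + 1) → ℝ) with hu
  have hcol : ∀ p : Fin N × Fin (n - r), ∃ c : ℝ, ∀ i, M i p = c * u i := by
    intro p
    have hmem : M.transpose p ∈ Submodule.span ℝ (Set.range M.transpose) :=
      Submodule.subset_span ⟨p, rfl⟩
    obtain ⟨c, hc⟩ := hv₀ ⟨M.transpose p, hmem⟩
    refine ⟨c, fun i => ?_⟩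
    have h2 : c • u = M.transpose p := by
      have := congrArg Subtype.val hc
      simpa [hu] using this
    have := congrFun h2 i
    simpa [Matrix.transpose_apply, mul_comm] using this.symm
  choose c hc using hcol
  -- polynomials
  have key : ∀ ℓ : Fin N, u = 0 ∨ (fun j : Fin (n - r) => c (ℓ, j)) = 0 := by
    intro ℓ
    set P : Polynomial ℝ := ∑ i, Polynomial.C (u i) * Polynomial.X ^ (i : ℕ)
    set Q : Polynomial ℝ := ∑ j : Fin (n - r), Polynomial.C (c (ℓ, j)) * Polynomial.X ^ (j : ℕ)
    have hPQ : P * Q = 0 := by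
      ext k
      rw [Polynomial.coeff_zero]
      by_cases hk : k < n
      · rw [coeff_key]
        have := hdiag ℓ ⟨k, hk⟩
        refine Eq.trans ?_ this
        refine Finset.sum_congr rfl fun i _ => Finset.sum_congr rfl fun j _ => ?_
        by_cases h : (i : ℕ) + (j : ℕ) = k
        · rw [if_pos h, if_pos h, mul_comm]
          exact (hc (ℓ, j) i).symm
        · rw [if_neg h, if_neg h]
      · refine Polynomial.coeff_eq_zero_of_natDegree_lt ?_
        have hP : P.natDegree ≤ r :=
          le_trans (poly_natDegree_le u) (by omega)
        have hQ : Q.natDegree ≤ n - r - 1 := poly_natDegree_le _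
        calc (P * Q).natDegree ≤ P.natDegree + Q.natDegree := Polynomial.natDegree_mul_le
          _ ≤ r + (n - r - 1) := by omega
          _ < k := by omega
    rcases mul_eq_zero.mp hPQ with h | h
    · left
      funext i
      have := poly_coeff_self u i
      rw [show (∑ i, Polynomial.C (u i) * Polynomial.X ^ (i : ℕ)) = P from rfl, h] at this
      simpa using this.symm
    · right
      funext j
      have := poly_coeff_self (fun j : Fin (n - r) => c (ℓ, j)) j
      rw [show (∑ j : Fin (n - r), Polynomial.C (c (ℓ, j)) * Polynomial.X ^ (j : ℕ)) = Q from rfl,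
        h] at this
      simpa using this.symm
  -- conclude
  ext i p
  obtain ⟨ℓ, j⟩ := p
  rcases key ℓ with h | h
  · have : u i = 0 := congrFun h i
    simp [hc (ℓ, j) i, this]
  · have : c (ℓ, j) = 0 := congrFun h j
    simp [hc (ℓ, j) i, this]
end

section
/- Let n and r be positive integers with r < n, and let R ∈ ℝ^{1×(r+1)} be a nonzero row vector. Then the linear map G_R : ℝⁿ → ℝ^{1×(n−r)} defined by G_R(y) = R · H_{r+1}(y) is surjective. -/
/-- Auxiliary recursive solution. -/
noncomputable def auxSol (k N : ℕ) (c z : ℕ → ℝ) (m : ℕ) : ℝ :=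
  if h : k ≤ m ∧ m - k < N then
    (z (m - k) - ∑ i ∈ (Finset.range k).attach,
        c i.1 * auxSol k N c z (i.1 + (m - k))) / c k
  else 0
  termination_by m
  decreasing_by
    have := Finset.mem_range.mp i.2; omega

/-- The Hankel operator `H_{r+1} : ℝⁿ → ℝ^{(r+1)×(n-r)}` (0-based indices). -/
def hankel (n r : ℕ) (hrn : r < n) (y : Fin n → ℝ) :
    Matrix (Fin (r + 1)) (Fin (n - r)) ℝ :=
  fun i j => y ⟨i.val + j.val, by omega⟩

/-- for any nonzero row vector `R ∈ ℝ^{1×(r+1)}`, the linear map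
`G_R : ℝⁿ → ℝ^{1×(n-r)}`, `y ↦ R ⬝ H_{r+1}(y)`, is surjective. -/
theorem stmt7 (n r : ℕ) (hn : 0 < n) (hr : 0 < r) (hrn : r < n)
    (R : Matrix (Fin 1) (Fin (r + 1)) ℝ) (hR : R ≠ 0) :
    Function.Surjective (fun y : Fin n → ℝ => R * hankel n r hrn y) := by
  intro Z
  -- set of nonzero coefficients
  have hex : ∃ i, R 0 i ≠ 0 := by
    by_contra h
    push_neg at h
    apply hR
    ext a b
    fin_cases a
    simp [h]
  set S : Finset (Fin (r + 1)) := Finset.univ.filter (fun i => R 0 i ≠ 0) with hS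
  have hSne : S.Nonempty := by
    obtain ⟨i, hi⟩ := hex
    exact ⟨i, by simp [hS, hi]⟩
  set k0 : Fin (r + 1) := S.max' hSne with hk0
  have hk0mem : k0 ∈ S := S.max'_mem hSne
  have hk0ne : R 0 k0 ≠ 0 := by simpa [hS] using hk0mem
  have hmax : ∀ i : Fin (r + 1), k0 < i → R 0 i = 0 := by
    intro i hi
    by_contra h
    have := S.le_max' i (by simp [hS, h])
    exact absurd this (not_le.mpr hi)
  set k : ℕ := k0.val with hk
  set c : ℕ → ℝ := fun i => if h : i < r + 1 then R 0 ⟨i, h⟩ else 0 with hc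
  set z : ℕ → ℝ := fun j => if h : j < n - r then Z 0 ⟨j, h⟩ else 0 with hz
  set f : ℕ → ℝ := auxSol k (n - r) c z with hf
  refine ⟨fun m => f m.val, ?_⟩
  ext a j
  fin_cases a
  simp only [Matrix.mul_apply, hankel]
  -- LHS : ∑ i : Fin (r+1), R 0 i * f (i + j)
  have hck : c k = R 0 k0 := by simp [hc, hk, not_lt.mpr (Nat.lt_succ_iff.mp k0.isLt)]
  have hsum : ∀ i : Fin (r + 1), R 0 i * f (i.val + j.val) = c i.val * f (i.val + j.val) := by
    intro i
    simp [hc, not_lt.mpr (Nat.lt_succ_iff.mp i.isLt)]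
  calc (∑ i : Fin (r + 1), R 0 i * f (i.val + j.val))
      = ∑ i ∈ Finset.range (r + 1), c i * f (i + j.val) := by
        rw [Finset.sum_range fun i => c i * f (i + j.val)]
        exact Finset.sum_congr rfl fun i _ => hsum i
    _ = ∑ i ∈ Finset.range (k + 1), c i * f (i + j.val) := by
        refine (Finset.sum_subset ?_ ?_).symm
        · intro x hx
          simp only [Finset.mem_range] at *
          have := k0.isLt
          omega
        · intro x hx hx'
          simp only [Finset.mem_range] at hx hx'
          have hx2 : x < r + 1 := hx
          have : R 0 ⟨x, hx2⟩ = 0 := hmax _ (by simp only [Fin.lt_def]; omega)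
          simp [hc, hx2, this]
    _ = (∑ i ∈ Finset.range k, c i * f (i + j.val)) + c k * f (k + j.val) := by
        rw [Finset.sum_range_succ]
    _ = Z 0 j := by
        have hjn : (k + j.val) - k = j.val := by omega
        have hcond : k ≤ k + j.val ∧ (k + j.val) - k < n - r := ⟨Nat.le_add_right _ _, by rw [hjn]; exact j.isLt⟩
        have : f (k + j.val) = (z j.val - ∑ i ∈ (Finset.range k).attach,
            c i.1 * f (i.1 + j.val)) / c k := by
          rw [hf, auxSol, dif_pos hcond, hjn]
        rw [this, Finset.sum_attach (Finset.range k) (fun i => c i * f (i + j.val))] at *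
        have hckne : c k ≠ 0 := by rw [hck]; exact hk0ne
        field_simp
        simp [hz, j.isLt]
end

section
/- Let n, N and r be positive integers with r < n, and let R ∈ ℝ^{1×(r+1)} be a nonzero row vector. Then the linear map G_R : ℝ^{Nn} → ℝ^{1×N(n−r)} defined by G_R(vec(y₁,…,y_N)) = R · [H_{r+1}(y₁) H_{r+1}(y₂) ⋯ H_{r+1}(y_N)] is surjective. -/
/-- The operator `L : ℝ^{Nn} → ℝ^{(r+1)×N(n-r)}`,
`vec(y₁,…,y_N) ↦ [H_{r+1}(y₁) ⋯ H_{r+1}(y_N)]` (horizontal concatenation, with columns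
indexed by `Fin N × Fin (n-r)`). -/
def hankelCat (n N r : ℕ) (hrn : r < n) (y : Fin N → Fin n → ℝ) :
    Matrix (Fin (r + 1)) (Fin N × Fin (n - r)) ℝ :=
  fun i p => hankel n r hrn (y p.1) i p.2

/-- for any nonzero row vector `R ∈ ℝ^{1×(r+1)}`, the linear map
`G_R : ℝ^{Nn} → ℝ^{1×N(n-r)}`, `vec(y₁,…,y_N) ↦ R ⬝ [H_{r+1}(y₁) ⋯ H_{r+1}(y_N)]`,
is surjective. -/
theorem stmt8 (n N r : ℕ) (hn : 0 < n) (hN : 0 < N) (hr : 0 < r) (hrn : r < n)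
    (R : Matrix (Fin 1) (Fin (r + 1)) ℝ) (hR : R ≠ 0) :
    Function.Surjective (fun y : Fin N → Fin n → ℝ => R * hankelCat n N r hrn y) := by
  classical
  intro T
  -- largest index where R is nonzero
  have hs : (Finset.univ.filter (fun i : Fin (r+1) => R 0 i ≠ 0)).Nonempty := by
    by_contra h
    apply hR
    ext i j
    have hi : i = 0 := Subsingleton.elim _ _
    subst hi
    by_contra hj
    exact h ⟨j, Finset.mem_filter.mpr ⟨Finset.mem_univ _, hj⟩⟩
  set k : Fin (r+1) := (Finset.univ.filter (fun i : Fin (r+1) => R 0 i ≠ 0)).max' hs with hkdef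
  have hk : R 0 k ≠ 0 := by
    have := Finset.max'_mem _ hs
    rw [← hkdef] at this
    exact (Finset.mem_filter.mp this).2
  have hkmax : ∀ i : Fin (r+1), k < i → R 0 i = 0 := by
    intro i hi
    by_contra hne
    have : i ≤ k := Finset.le_max' _ i (Finset.mem_filter.mpr ⟨Finset.mem_univ _, hne⟩)
    exact absurd hi (not_lt.mpr this)
  have hkr : k.val ≤ r := Nat.lt_succ_iff.mp k.isLt
  -- extended row vector
  set Rx : ℕ → ℝ := fun m => if h : m ≤ r then R 0 ⟨m, by omega⟩ else 0 with hRxdef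
  have hRxval : ∀ i : Fin (r+1), Rx i.val = R 0 i := by
    intro i
    have : i.val ≤ r := Nat.lt_succ_iff.mp i.isLt
    simp [Rx, this]
  have hRxgt : ∀ m, k.val < m → Rx m = 0 := by
    intro m hm
    by_cases h : m ≤ r
    · simp only [Rx, dif_pos h]
      exact hkmax ⟨m, by omega⟩ (by simpa [Fin.lt_def] using hm)
    · simp [Rx, h]
  -- the triangular matrix
  set M : Matrix (Fin (n-r)) (Fin (n-r)) ℝ :=
    (fun p j => if p.val ≤ k.val + j.val then Rx (k.val + j.val - p.val) else 0) with hMdef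
  have hMdiag : ∀ p, M p p = R 0 k := by
    intro p
    have h1 : p.val ≤ k.val + p.val := Nat.le_add_left _ _
    have h2 : k.val + p.val - p.val = k.val := by omega
    simp only [M, if_pos h1, h2]
    exact hRxval k
  have hMtri : M.BlockTriangular OrderDual.toDual := by
    intro p j h
    have hpj : p < j := h
    rw [Fin.lt_def] at hpj
    simp only [M]
    by_cases h1 : p.val ≤ k.val + j.val
    · rw [if_pos h1]
      exact hRxgt _ (by omega)
    · rw [if_neg h1]
  have hdet : M.det ≠ 0 := by
    rw [Matrix.det_of_lowerTriangular M hMtri]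
    exact Finset.prod_ne_zero_iff.mpr fun p _ => by rw [hMdiag]; exact hk
  have hMinv : M * M⁻¹ = 1 := Matrix.mul_nonsing_inv M (isUnit_iff_ne_zero.mpr hdet)
  set c : Fin N → Fin (n-r) → ℝ := fun b => M⁻¹.mulVec (fun j => T 0 (b, j)) with hcdef
  have hMc : ∀ b (j : Fin (n-r)), M.mulVec (c b) j = T 0 (b, j) := by
    intro b j
    rw [hcdef]
    simp only [Matrix.mulVec_mulVec, hMinv, Matrix.one_mulVec]
  set e : Fin N → ℕ → ℝ := fun b m => if h : m < n - r then c b ⟨m, h⟩ else 0 with hedef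
  refine ⟨fun b m => if k.val ≤ m.val then e b (m.val - k.val) else 0, ?_⟩
  funext i q
  obtain ⟨b, p⟩ := q
  have hi : i = 0 := Subsingleton.elim _ _
  subst hi
  have hp : p.val < n - r := p.isLt
  -- the common sum
  set F : ℕ → ℝ := fun m =>
    (if p.val ≤ m then Rx (m - p.val) else 0) * (if k.val ≤ m then e b (m - k.val) else 0)
    with hFdef
  have stepA : (R * hankelCat n N r hrn
      (fun b m => if k.val ≤ m.val then e b (m.val - k.val) else 0)) 0 (b, p)
      = ∑ m ∈ Finset.range n, F m := by
    rw [Matrix.mul_apply]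
    have h1 : ∀ x : Fin (r+1),
        R 0 x * hankelCat n N r hrn
          (fun b m => if k.val ≤ m.val then e b (m.val - k.val) else 0) x (b, p)
        = Rx x.val * (if k.val ≤ x.val + p.val then e b (x.val + p.val - k.val) else 0) := by
      intro x
      rw [hRxval]
      rfl
    rw [Finset.sum_congr rfl (fun x _ => h1 x)]
    rw [Fin.sum_univ_eq_sum_range
      (fun x => Rx x * (if k.val ≤ x + p.val then e b (x + p.val - k.val) else 0))]
    have hsub : Finset.Ico p.val (p.val + r + 1) ⊆ Finset.range n := by
      intro m hm
      rw [Finset.mem_Ico] at hm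
      rw [Finset.mem_range]
      omega
    rw [← Finset.sum_subset hsub]
    · rw [Finset.sum_Ico_eq_sum_range]
      have : p.val + r + 1 - p.val = r + 1 := by omega
      rw [this]
      refine Finset.sum_congr rfl fun x _ => ?_
      simp only [F]
      have h2 : p.val ≤ p.val + x := Nat.le_add_right _ _
      have h3 : p.val + x - p.val = x := by omega
      have h4 : p.val + x = x + p.val := by omega
      rw [if_pos h2, h3, h4]
    · intro m hm hm2
      rw [Finset.mem_range] at hm
      rw [Finset.mem_Ico] at hm2
      simp only [F]
      by_cases h5 : p.val ≤ m
      · rw [if_pos h5, hRxgt _ (by omega), zero_mul]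
      · rw [if_neg h5, zero_mul]
  have stepB : ∑ m ∈ Finset.range n, F m = T 0 (b, p) := by
    rw [← hMc b p]
    have hmv : M.mulVec (c b) p = ∑ j : Fin (n - r), M p j * c b j := by
      simp [Matrix.mulVec, dotProduct]
    rw [hmv]
    have hcongr : ∀ j : Fin (n - r), M p j * c b j = F (k.val + j.val) := by
      intro j
      simp only [F]
      have h7 : k.val ≤ k.val + j.val := Nat.le_add_right _ _
      have h8 : k.val + j.val - k.val = j.val := by omega
      rw [if_pos h7, h8]
      simp only [M, e, dif_pos j.isLt]
    rw [Finset.sum_congr rfl (fun j _ => hcongr j),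
      Fin.sum_univ_eq_sum_range (fun j => F (k.val + j))]
    have hsub : Finset.Ico k.val (k.val + (n - r)) ⊆ Finset.range n := by
      intro m hm
      rw [Finset.mem_Ico] at hm
      rw [Finset.mem_range]
      omega
    rw [← Finset.sum_subset hsub]
    · rw [Finset.sum_Ico_eq_sum_range]
      have h6 : k.val + (n - r) - k.val = n - r := by omega
      rw [h6]
    · intro m hm hm2
      rw [Finset.mem_range] at hm
      rw [Finset.mem_Ico] at hm2
      simp only [F]
      by_cases h5 : k.val ≤ m
      · have h9 : ¬ (m - k.val < n - r) := by omega
        simp only [e, dif_neg h9, if_pos h5, mul_zero, ite_self]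
      · rw [if_neg h5, mul_zero]
  show (R * hankelCat n N r hrn
      (fun b m => if k.val ≤ m.val then e b (m.val - k.val) else 0)) 0 (b, p) = T 0 (b, p)
  exact stepA.trans stepB
end

section
/- Let n ≥ 3 be an integer and let ŷ ∈ ℝⁿ satisfy rank(H₂(ŷ)) = 2, where H₂(ŷ) ∈ ℝ^{2×(n−1)} is the 2-row Hankel matrix of ŷ. Suppose y* ∈ ℝⁿ is a global minimizer of the problem: minimize (1/2)‖y − ŷ‖² subject to rank(H₂(y)) ≤ 1; that is, rank(H₂(y*)) ≤ 1 and ‖y* − ŷ‖ ≤ ‖y − ŷ‖ for every y ∈ ℝⁿ with rank(H₂(y)) ≤ 1. Then rank(H₂(y*)) = 1. -/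
open RealInnerProductSpace

/-- The 2-row Hankel operator `H₂ : ℝⁿ → ℝ^{2×(n-1)}` (0-based indices):
`(H₂ y)(i,j) = y (i + j)`. -/
def hankel2 (n : ℕ) (hn : 1 < n) (y : EuclideanSpace ℝ (Fin n)) :
    Matrix (Fin 2) (Fin (n - 1)) ℝ :=
  fun i j => y ⟨i.val + j.val, by omega⟩

/-- A matrix of rank zero over a field is zero. -/
lemma rank_zero_eq_zero {m k : Type*} [Fintype m] [Fintype k] [DecidableEq k]
    (A : Matrix m k ℝ) (h : A.rank = 0) : A = 0 := by
  have hr : LinearMap.range A.mulVecLin = ⊥ := by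
    rw [Matrix.rank] at h
    exact Submodule.finrank_eq_zero.mp h
  have hz : A.mulVecLin = 0 := LinearMap.range_eq_bot.mp hr
  ext i j
  have h1 : A.mulVec (Pi.single j 1) = 0 := by
    rw [show A.mulVec (Pi.single j 1) = A.mulVecLin (Pi.single j 1) from rfl, hz]; rfl
  have h2 := congrFun h1 i
  rw [Matrix.mulVec_single_one] at h2
  simpa using h2

/-- Outer products have rank at most one. -/
lemma rank_outer_le_one {m k : Type*} [Fintype m] [Fintype k]
    (c : m → ℝ) (w : k → ℝ) : Matrix.rank (Matrix.of fun i j => c i * w j) ≤ 1 := by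
  have : (Matrix.of fun i j => c i * w j)
      = Matrix.replicateCol Unit c * Matrix.replicateRow Unit w := by
    ext i j
    simp [Matrix.mul_apply, Matrix.replicateCol_apply, Matrix.replicateRow_apply]
  rw [this]
  exact (Matrix.rank_mul_le_left _ _).trans
    ((Matrix.rank_le_card_width _).trans (le_of_eq Fintype.card_unit))

/-- if `rank(H₂(ŷ)) = 2` and `y*` is a global minimizer of
`min (1/2)‖y − ŷ‖² s.t. rank(H₂(y)) ≤ 1`, then `rank(H₂(y*)) = 1`. -/
theorem stmt10 (n : ℕ) (hn : 3 ≤ n)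
    (yhat : EuclideanSpace ℝ (Fin n))
    (hyhat : Matrix.rank (hankel2 n (by omega) yhat) = 2)
    (ystar : EuclideanSpace ℝ (Fin n))
    (hfeas : Matrix.rank (hankel2 n (by omega) ystar) ≤ 1)
    (hmin : ∀ y : EuclideanSpace ℝ (Fin n),
        Matrix.rank (hankel2 n (by omega) y) ≤ 1 → ‖ystar - yhat‖ ≤ ‖y - yhat‖) :
    Matrix.rank (hankel2 n (by omega) ystar) = 1 := by
  rcases Nat.lt_or_ge (Matrix.rank (hankel2 n (by omega) ystar)) 1 with h0 | h1
  swap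
  · omega
  -- rank 0 : ystar = 0
  exfalso
  have hH0 : hankel2 n (by omega : 1 < n) ystar = 0 :=
    rank_zero_eq_zero _ (by omega)
  have hstar0 : ystar = 0 := by
    ext k
    show ystar k = 0
    rcases Nat.lt_or_ge (k : ℕ) (n - 1) with hk | hk
    · have h := congrFun (congrFun hH0 0) ⟨(k : ℕ), hk⟩
      simp only [hankel2, Matrix.zero_apply] at h
      rw [← h]
      exact congrArg ystar.ofLp (Fin.ext (by simp))
    · have hk3 : (k : ℕ) - 1 < n - 1 := by omega
      have h := congrFun (congrFun hH0 1) ⟨(k : ℕ) - 1, hk3⟩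
      simp only [hankel2, Matrix.zero_apply] at h
      rw [← h]
      exact congrArg ystar.ofLp (Fin.ext (by simp; omega))
  -- yhat ≠ 0
  have hyne : yhat ≠ 0 := by
    intro h
    rw [h] at hyhat
    have hz : hankel2 n (by omega : 1 < n) (0 : EuclideanSpace ℝ (Fin n)) = 0 := by
      funext i j
      show (0 : EuclideanSpace ℝ (Fin n)) _ = 0
      rfl
    rw [hz, Matrix.rank_zero] at hyhat
    omega
  -- find r with ∑ k, yhat k * r^k ≠ 0
  obtain ⟨r, hr⟩ : ∃ r : ℝ, ∑ k : Fin n, yhat k * r ^ (k : ℕ) ≠ 0 := by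
    by_contra h
    push_neg at h
    apply hyne
    set p : Polynomial ℝ := ∑ k : Fin n, Polynomial.C (yhat k) * Polynomial.X ^ (k : ℕ) with hp
    have hpz : p = 0 := by
      apply Polynomial.funext
      intro r
      simp only [hp, Polynomial.eval_finset_sum, Polynomial.eval_mul, Polynomial.eval_C,
        Polynomial.eval_pow, Polynomial.eval_X, Polynomial.eval_zero]
      exact h r
    ext k
    show yhat k = 0
    have hc := congrArg (fun q => Polynomial.coeff q (k : ℕ)) hpz
    simp only [hp, Polynomial.finset_sum_coeff, Polynomial.coeff_C_mul,
      Polynomial.coeff_X_pow, Polynomial.coeff_zero, mul_ite, mul_one, mul_zero] at hc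
    rw [Finset.sum_eq_single k] at hc
    · simpa using hc
    · intro b _ hb
      rw [if_neg]
      exact fun h' => hb (Fin.ext h'.symm)
    · intro hk; exact absurd (Finset.mem_univ k) hk
  -- the geometric vector
  set v : EuclideanSpace ℝ (Fin n) := WithLp.toLp 2 (fun k => r ^ (k : ℕ)) with hv
  set s : ℝ := ∑ k : Fin n, yhat k * r ^ (k : ℕ) with hs
  have hvnorm : 0 < ‖v‖ ^ 2 := by
    have hvne : v ≠ 0 := by
      intro h
      have h0 := congrArg (fun w : EuclideanSpace ℝ (Fin n) => w (⟨0, by omega⟩ : Fin n)) h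
      simp [hv] at h0
    exact pow_pos (norm_pos_iff.mpr hvne) 2
  set t : ℝ := s / ‖v‖ ^ 2 with ht
  -- the candidate y = t • v has Hankel rank ≤ 1
  have hrank : Matrix.rank (hankel2 n (by omega : 1 < n) (t • v)) ≤ 1 := by
    have heq : hankel2 n (by omega : 1 < n) (t • v)
        = Matrix.of fun (i : Fin 2) (j : Fin (n - 1)) => (t * r ^ (i : ℕ)) * r ^ (j : ℕ) := by
      funext i j
      show (t • v) _ = (t * r ^ (i : ℕ)) * r ^ (j : ℕ)
      simp only [PiLp.smul_apply, smul_eq_mul, hv, PiLp.toLp_apply]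
      rw [mul_assoc, ← pow_add]
    rw [heq]
    exact rank_outer_le_one _ _
  have hinner : (inner ℝ (t • v) yhat : ℝ) = t * s := by
    rw [real_inner_smul_left]
    congr 1
  -- strict improvement
  have hkey : ‖t • v - yhat‖ ^ 2 < ‖yhat‖ ^ 2 := by
    have hexp : ‖t • v - yhat‖ ^ 2 = ‖t • v‖ ^ 2 - 2 * (inner ℝ (t • v) yhat : ℝ) + ‖yhat‖ ^ 2 :=
      norm_sub_sq_real _ _
    have hnv : ‖t • v‖ ^ 2 = t ^ 2 * ‖v‖ ^ 2 := by
      rw [norm_smul]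
      simp [mul_pow, sq_abs]
    rw [hexp, hnv, hinner, ht]
    have hs2 : 0 < s ^ 2 / ‖v‖ ^ 2 :=
      div_pos (lt_of_le_of_ne (sq_nonneg s) (Ne.symm (pow_ne_zero 2 hr))) hvnorm
    have e1 : s / ‖v‖ ^ 2 * s = s ^ 2 / ‖v‖ ^ 2 := by ring
    have e2 : (s / ‖v‖ ^ 2) ^ 2 * ‖v‖ ^ 2 = s ^ 2 / ‖v‖ ^ 2 := by
      field_simp
    rw [e1, e2]
    linarith
  have hle := hmin (t • v) hrank
  rw [hstar0, zero_sub, norm_neg] at hle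
  have hle2 : ‖yhat‖ ^ 2 ≤ ‖t • v - yhat‖ ^ 2 :=
    pow_le_pow_left₀ (norm_nonneg _) hle 2
  linarith
end

section
/- Let d be a positive integer, let h : ℝ^d → ℝ be differentiable with ∇h Lipschitz continuous with constant L > 0, and let g : ℝ^d → ℝ. Fix y ∈ ℝ^d and ξ ∈ ℝ^d satisfying the subgradient inequality g(w) ≥ g(y) + ⟨ξ, w − y⟩ for all w ∈ ℝ^d. Let L' > 0 and suppose u ∈ ℝ^d satisfies ‖u − (y − (1/L')(∇h(y) − ξ))‖ ≤ ‖y − (y − (1/L')(∇h(y) − ξ))‖. Then h(u) − g(u) ≤ h(y) − g(y) + ((L − L')/2)‖u − y‖². In particular, if L' ≥ L + c for some c > 0, then h(u) − g(u) ≤ h(y) − g(y) − (c/2)‖u − y‖². -/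
open scoped RealInnerProductSpace

lemma descent_lemma {d : ℕ} (h : EuclideanSpace ℝ (Fin d) → ℝ)
    (h' : EuclideanSpace ℝ (Fin d) → EuclideanSpace ℝ (Fin d))
    (hdiff : ∀ x, HasGradientAt h (h' x) x)
    (L : ℝ) (hL : 0 ≤ L)
    (hlip : ∀ x y, ‖h' x - h' y‖ ≤ L * ‖x - y‖)
    (y u : EuclideanSpace ℝ (Fin d)) :
    h u ≤ h y + ⟪h' y, u - y⟫ + L / 2 * ‖u - y‖ ^ 2 := by
  set v := u - y with hv
  set φ : ℝ → ℝ := fun t => h (y + t • v) - t * ⟪h' y, v⟫ - L / 2 * t ^ 2 * ‖v‖ ^ 2 with hφ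
  have hline : ∀ t : ℝ, HasDerivAt (fun s : ℝ => y + s • v) v t := by
    intro t
    simpa using ((hasDerivAt_id t).smul_const v).const_add y
  have hderiv : ∀ t : ℝ, HasDerivAt φ
      (⟪h' (y + t • v), v⟫ - ⟪h' y, v⟫ - L / 2 * (2 * t) * ‖v‖ ^ 2) t := by
    intro t
    have h1 : HasDerivAt (fun s : ℝ => h (y + s • v)) ⟪h' (y + t • v), v⟫ t := by
      have := ((hdiff (y + t • v)).hasFDerivAt.comp t (hline t).hasFDerivAt).hasDerivAt
      simp at this
      exact this
    have h2 : HasDerivAt (fun s : ℝ => s * ⟪h' y, v⟫) ⟪h' y, v⟫ t := by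
      simpa using (hasDerivAt_id t).mul_const (⟪h' y, v⟫)
    have h3 : HasDerivAt (fun s : ℝ => L / 2 * s ^ 2 * ‖v‖ ^ 2)
        (L / 2 * (2 * t) * ‖v‖ ^ 2) t := by
      have := ((hasDerivAt_pow 2 t).const_mul (L / 2)).mul_const (‖v‖ ^ 2)
      simpa [mul_comm, mul_assoc, mul_left_comm] using this
    exact (h1.sub h2).sub h3
  have key : φ 1 ≤ φ 0 := by
    have hφc : ContinuousOn φ (Set.Icc 0 1) :=
      fun t _ => (hderiv t).continuousAt.continuousWithinAt
    have mono : AntitoneOn φ (Set.Icc 0 1) := by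
      apply antitoneOn_of_deriv_nonpos (convex_Icc (0:ℝ) 1) hφc
        (fun t _ => (hderiv t).differentiableAt.differentiableWithinAt)
      intro t ht
      rw [interior_Icc] at ht
      rw [(hderiv t).deriv]
      have hb : ⟪h' (y + t • v) - h' y, v⟫ ≤ L * t * ‖v‖ ^ 2 := by
        calc ⟪h' (y + t • v) - h' y, v⟫ ≤ ‖h' (y + t • v) - h' y‖ * ‖v‖ :=
              real_inner_le_norm _ _
          _ ≤ (L * ‖(y + t • v) - y‖) * ‖v‖ := by
              gcongr; exact hlip _ _
          _ = L * t * ‖v‖ ^ 2 := by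
              simp [norm_smul, abs_of_pos ht.1, sq]; ring
      have := hb
      rw [inner_sub_left] at this
      nlinarith [this]
    exact mono (Set.left_mem_Icc.2 zero_le_one) (Set.right_mem_Icc.2 zero_le_one) zero_le_one
  have h0 : φ 0 = h y := by simp [hφ]
  have h1 : φ 1 = h u - ⟪h' y, v⟫ - L / 2 * ‖v‖ ^ 2 := by
    have hyv : y + v = u := by rw [hv]; abel
    simp [hφ, hyv]
  rw [h0, h1] at key
  linarith

/-- sufficient decrease from a pseudo-projection step: if `h` is differentiable
with `L`-Lipschitz gradient `h'`, `ξ` is a subgradient of `g` at `y`, and `u` is at least as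
close to the gradient-step point `y − (1/L')(∇h(y) − ξ)` as `y` is, then
`h(u) − g(u) ≤ h(y) − g(y) + ((L − L')/2)‖u − y‖²`; in particular, if `L' ≥ L + c` for some
`c > 0`, then `h(u) − g(u) ≤ h(y) − g(y) − (c/2)‖u − y‖²`. -/
theorem stmt14 (d : ℕ) (hd : 0 < d)
    (h g : EuclideanSpace ℝ (Fin d) → ℝ)
    (h' : EuclideanSpace ℝ (Fin d) → EuclideanSpace ℝ (Fin d))
    (hdiff : ∀ x, HasGradientAt h (h' x) x)
    (L : ℝ) (hL : 0 < L)
    (hlip : ∀ x y, ‖h' x - h' y‖ ≤ L * ‖x - y‖)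
    (y ξ : EuclideanSpace ℝ (Fin d))
    (hsub : ∀ w, g y + ⟪ξ, w - y⟫ ≤ g w)
    (L' : ℝ) (hL' : 0 < L')
    (u : EuclideanSpace ℝ (Fin d))
    (hu : ‖u - (y - (1 / L') • (h' y - ξ))‖ ≤ ‖y - (y - (1 / L') • (h' y - ξ))‖) :
    h u - g u ≤ h y - g y + ((L - L') / 2) * ‖u - y‖ ^ 2
    ∧ ∀ c : ℝ, 0 < c → L + c ≤ L' → h u - g u ≤ h y - g y - (c / 2) * ‖u - y‖ ^ 2 := by
  set s : EuclideanSpace ℝ (Fin d) := (1 / L') • (h' y - ξ) with hs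
  have hue : u - (y - s) = (u - y) + s := by abel
  have hye : y - (y - s) = s := by abel
  rw [hue, hye] at hu
  have hsq : ‖(u - y) + s‖ ^ 2 ≤ ‖s‖ ^ 2 := by
    have := pow_le_pow_left₀ (norm_nonneg _) hu 2
    exact this
  rw [norm_add_sq_real] at hsq
  have hinner : ⟪u - y, s⟫ ≤ - (1 / 2) * ‖u - y‖ ^ 2 := by nlinarith
  have hinner' : ⟪h' y - ξ, u - y⟫ ≤ - (L' / 2) * ‖u - y‖ ^ 2 := by
    have : ⟪u - y, s⟫ = (1 / L') * ⟪h' y - ξ, u - y⟫ := by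
      rw [hs, real_inner_smul_right, real_inner_comm]
    rw [this] at hinner
    have := mul_le_mul_of_nonneg_left hinner (le_of_lt hL')
    rw [← mul_assoc] at this
    field_simp at this ⊢
    linarith
  have hdes := descent_lemma h h' hdiff L (le_of_lt hL) hlip y u
  have hg := hsub u
  rw [inner_sub_left] at hinner'
  have main : h u - g u ≤ h y - g y + ((L - L') / 2) * ‖u - y‖ ^ 2 := by linarith
  refine ⟨main, fun c hc hcL => ?_⟩
  nlinarith [sq_nonneg ‖u - y‖, main]
end

section
/- Let E be ℝ^m with the Euclidean norm (or any complete real normed vector space). Let ȳ ∈ E, c₀ ∈ (0,1), ε > 0, and let (x^t)_{t≥0}, (z^t)_{t≥0} be sequences in E such that for all t ≥ 0: (i) ‖z^{t+1} − x^t‖ ≤ ‖z^t − x^t‖; (ii) ‖x^{t+1} − z^{t+1}‖ ≤ ‖x^t − z^{t+1}‖; and (iii) if ‖z^{t+1} − ȳ‖ ≤ ε/2 and ‖z^{t+1} − x^t‖ ≤ ε/2, then ‖x^{t+1} − z^{t+1}‖ ≤ c₀‖x^t − z^{t+1}‖. Set γ := ‖x⁰ − ȳ‖ + ‖z⁰ −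 x⁰‖ and assume γ < (1 − c₀)ε/4. Then for all t ≥ 0 the inequalities ‖z^{t+1} − x^t‖ ≤ γ c₀^t, ‖z^{t+1} − ȳ‖ ≤ 2γ(1 − c₀^{t+1})/(1 − c₀) and ‖x^{t+1} − z^{t+1}‖ ≤ γ c₀^{t+1} hold, and there exists y* ∈ E such that both sequences converge to y* with ‖z^t − y*‖ ≤ 2γ c₀^t/(1 − c₀) and ‖x^t − y*‖ ≤ γ c₀^t (1 + c₀)/(1 − c₀) for every t ≥ 0; in particular both sequences converge to the common limit R-linearly. -/
/-- R-linear convergence of the alternating pseudo-projection iterates: given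
sequences `(x^t)`, `(z^t)` in a complete real normed space satisfying the nonexpansiveness
conditions (i), (ii) and the local contraction condition (iii), if
`γ := ‖x⁰ − ȳ‖ + ‖z⁰ − x⁰‖ < (1 − c₀)ε/4`, then the stated geometric bounds hold and both
sequences converge R-linearly to a common limit `y*`. -/
theorem stmt15 (E : Type*) [NormedAddCommGroup E] [NormedSpace ℝ E] [CompleteSpace E]
    (ybar : E) (c0 : ℝ) (hc0 : 0 < c0) (hc1 : c0 < 1) (eps : ℝ) (heps : 0 < eps)
    (x z : ℕ → E)
    (h1 : ∀ t : ℕ, ‖z (t + 1) - x t‖ ≤ ‖z t - x t‖)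
    (h2 : ∀ t : ℕ, ‖x (t + 1) - z (t + 1)‖ ≤ ‖x t - z (t + 1)‖)
    (h3 : ∀ t : ℕ, ‖z (t + 1) - ybar‖ ≤ eps / 2 → ‖z (t + 1) - x t‖ ≤ eps / 2 →
        ‖x (t + 1) - z (t + 1)‖ ≤ c0 * ‖x t - z (t + 1)‖)
    (γ : ℝ) (hγ : γ = ‖x 0 - ybar‖ + ‖z 0 - x 0‖)
    (hγlt : γ < (1 - c0) * eps / 4) :
    (∀ t : ℕ,
        ‖z (t + 1) - x t‖ ≤ γ * c0 ^ t
        ∧ ‖z (t + 1) - ybar‖ ≤ 2 * γ * (1 - c0 ^ (t + 1)) / (1 - c0)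
        ∧ ‖x (t + 1) - z (t + 1)‖ ≤ γ * c0 ^ (t + 1))
    ∧ ∃ ystar : E,
        Filter.Tendsto z Filter.atTop (nhds ystar)
        ∧ Filter.Tendsto x Filter.atTop (nhds ystar)
        ∧ ∀ t : ℕ, ‖z t - ystar‖ ≤ 2 * γ * c0 ^ t / (1 - c0)
            ∧ ‖x t - ystar‖ ≤ γ * c0 ^ t * (1 + c0) / (1 - c0) := by
  have hγ0 : 0 ≤ γ := by
    rw [hγ]; positivity
  have hc1' : (0:ℝ) < 1 - c0 := by linarith
  have hpowle : ∀ n : ℕ, c0 ^ n ≤ 1 := fun n => pow_le_one₀ hc0.le hc1.le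
  have hpow0 : ∀ n : ℕ, (0:ℝ) ≤ c0 ^ n := fun n => pow_nonneg hc0.le n
  -- 2γ/(1-c0) ≤ ε/2
  have hεb : 2 * γ / (1 - c0) ≤ eps / 2 := by
    rw [div_le_div_iff₀ hc1' (by norm_num)]
    nlinarith
  have hεb2 : γ ≤ eps / 2 := by nlinarith
  have key : ∀ t : ℕ, ‖z (t + 1) - x t‖ ≤ γ * c0 ^ t
        ∧ ‖z (t + 1) - ybar‖ ≤ 2 * γ * (1 - c0 ^ (t + 1)) / (1 - c0)
        ∧ ‖x (t + 1) - z (t + 1)‖ ≤ γ * c0 ^ (t + 1) := by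
    intro t
    induction t with
    | zero =>
      have ha : ‖z 1 - x 0‖ ≤ γ * c0 ^ 0 := by
        simp only [pow_zero, mul_one]
        refine (h1 0).trans ?_
        rw [hγ]; nlinarith [norm_nonneg (x 0 - ybar)]
      have hb : ‖z 1 - ybar‖ ≤ 2 * γ * (1 - c0 ^ (0 + 1)) / (1 - c0) := by
        have htri : ‖z 1 - ybar‖ ≤ ‖z 1 - x 0‖ + ‖x 0 - ybar‖ :=
          norm_sub_le_norm_sub_add_norm_sub _ _ _
        have hx0 : ‖x 0 - ybar‖ ≤ γ := by rw [hγ]; nlinarith [norm_nonneg (z 0 - x 0)]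
        have : 2 * γ * (1 - c0 ^ (0 + 1)) / (1 - c0) = 2 * γ := by
          field_simp
          ring
        rw [this]
        simp only [pow_zero, mul_one] at ha
        linarith
      refine ⟨ha, hb, ?_⟩
      have hεz : ‖z 1 - ybar‖ ≤ eps / 2 := by
        refine hb.trans ?_
        refine le_trans ?_ hεb
        gcongr ?_ / (1 - c0)
        nlinarith [mul_nonneg hγ0 (hpow0 (0 + 1))]
      have hεx : ‖z 1 - x 0‖ ≤ eps / 2 := by
        simp only [pow_zero, mul_one] at ha
        linarith
      have := h3 0 hεz hεx
      rw [norm_sub_rev (x 0)] at this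
      refine this.trans ?_
      simp only [pow_zero, mul_one] at ha ⊢
      rw [pow_one]
      nlinarith
    | succ t ih =>
      obtain ⟨ih1, ih2, ih3⟩ := ih
      have ha : ‖z (t + 2) - x (t + 1)‖ ≤ γ * c0 ^ (t + 1) := by
        refine (h1 (t + 1)).trans ?_
        rw [norm_sub_rev]; exact ih3
      have hb : ‖z (t + 2) - ybar‖ ≤ 2 * γ * (1 - c0 ^ (t + 2)) / (1 - c0) := by
        have htri : ‖z (t + 2) - ybar‖ ≤ ‖z (t + 2) - x (t + 1)‖ + ‖x (t + 1) - ybar‖ :=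
          norm_sub_le_norm_sub_add_norm_sub _ _ _
        have htri2 : ‖x (t + 1) - ybar‖ ≤ ‖x (t + 1) - z (t + 1)‖ + ‖z (t + 1) - ybar‖ :=
          norm_sub_le_norm_sub_add_norm_sub _ _ _
        have heq : 2 * γ * (1 - c0 ^ (t + 2)) / (1 - c0)
            = 2 * (γ * c0 ^ (t + 1)) + 2 * γ * (1 - c0 ^ (t + 1)) / (1 - c0) := by
          field_simp
          ring
        rw [heq]
        linarith
      refine ⟨ha, hb, ?_⟩
      have hεz : ‖z (t + 2) - ybar‖ ≤ eps / 2 := by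
        refine hb.trans ?_
        refine le_trans ?_ hεb
        gcongr ?_ / (1 - c0)
        nlinarith [mul_nonneg hγ0 (hpow0 (t + 2))]
      have hεx : ‖z (t + 2) - x (t + 1)‖ ≤ eps / 2 := by
        refine ha.trans (le_trans ?_ hεb2)
        nlinarith [hpowle (t + 1)]
      have := h3 (t + 1) hεz hεx
      rw [norm_sub_rev (x (t + 1))] at this
      refine this.trans ?_
      have : c0 * ‖z (t + 2) - x (t + 1)‖ ≤ c0 * (γ * c0 ^ (t + 1)) :=
        mul_le_mul_of_nonneg_left ha hc0.le
      refine this.trans (le_of_eq ?_)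
      ring
  refine ⟨key, ?_⟩
  -- successive distance bound for z
  have hxz : ∀ t : ℕ, ‖x t - z t‖ ≤ γ * c0 ^ t + γ * (1 - c0 ^ t) := by
    intro t
    match t with
    | 0 =>
      simp only [pow_zero, mul_one, sub_self, mul_zero, add_zero]
      rw [norm_sub_rev, hγ]; nlinarith [norm_nonneg (x 0 - ybar)]
    | (t + 1) =>
      have := (key t).2.2
      refine this.trans ?_
      nlinarith [hpow0 (t+1), hpowle (t+1)]
  have hdz : ∀ n : ℕ, dist (z n) (z (n + 1)) ≤ 2 * γ * c0 ^ n := by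
    intro n
    rw [dist_eq_norm, norm_sub_rev]
    have htri : ‖z (n + 1) - z n‖ ≤ ‖z (n + 1) - x n‖ + ‖x n - z n‖ :=
      norm_sub_le_norm_sub_add_norm_sub _ _ _
    have h1' : ‖z (n + 1) - x n‖ ≤ γ * c0 ^ n := (key n).1
    have h2' : ‖x n - z n‖ ≤ γ * c0 ^ n + γ * (1 - c0 ^ n) := hxz n
    have hle : γ * (1 - c0 ^ n) ≤ γ * c0 ^ n ∨ True := Or.inr trivial
    -- crude: ‖x n - z n‖ ≤ γ ≤ ? not geometric for n=0... need better
    match n with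
    | 0 =>
      simp only [pow_zero, mul_one] at h1' ⊢
      simp only [pow_zero, mul_one, sub_self, mul_zero, add_zero] at h2'
      linarith
    | (n + 1) =>
      have h2'' : ‖x (n + 1) - z (n + 1)‖ ≤ γ * c0 ^ (n + 1) := (key n).2.2
      linarith
  have hcauchy : CauchySeq z := cauchySeq_of_le_geometric c0 (2 * γ) hc1 hdz
  obtain ⟨ystar, hz⟩ := cauchySeq_tendsto_of_complete hcauchy
  have hzbound : ∀ t : ℕ, ‖z t - ystar‖ ≤ 2 * γ * c0 ^ t / (1 - c0) := by
    intro t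
    have := dist_le_of_le_geometric_of_tendsto c0 (2 * γ) hc1 hdz hz t
    rwa [dist_eq_norm] at this
  have hxbound : ∀ t : ℕ, ‖x t - ystar‖ ≤ γ * c0 ^ t * (1 + c0) / (1 - c0) := by
    intro t
    have htri : ‖x t - ystar‖ ≤ ‖x t - z (t + 1)‖ + ‖z (t + 1) - ystar‖ :=
      norm_sub_le_norm_sub_add_norm_sub _ _ _
    have h1' : ‖x t - z (t + 1)‖ ≤ γ * c0 ^ t := by
      rw [norm_sub_rev]; exact (key t).1
    have h2' : ‖z (t + 1) - ystar‖ ≤ 2 * γ * c0 ^ (t + 1) / (1 - c0) := hzbound (t + 1)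
    have heq : γ * c0 ^ t * (1 + c0) / (1 - c0)
        = γ * c0 ^ t + 2 * γ * c0 ^ (t + 1) / (1 - c0) := by
      field_simp
      ring
    rw [heq]
    linarith
  have hx : Filter.Tendsto x Filter.atTop (nhds ystar) := by
    rw [tendsto_iff_norm_sub_tendsto_zero]
    refine squeeze_zero (fun t => norm_nonneg _) hxbound ?_
    have : Filter.Tendsto (fun t : ℕ => c0 ^ t) Filter.atTop (nhds 0) :=
      tendsto_pow_atTop_nhds_zero_of_lt_one hc0.le hc1
    have := this.const_mul (γ * (1 + c0) / (1 - c0))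
    simp only [mul_zero] at this
    refine this.congr fun t => ?_
    field_simp
  exact ⟨ystar, hz, hx, fun t => ⟨hzbound t, hxbound t⟩⟩
end
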